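/- Let d ≥ 2 be an integer, let c₀ ≠ c₁ be two rational numbers, and let σ : ℕ → ℚ be a sequence with σ_n ∈ {c₀, c₁} for all n. Then the real number ∑_{n=0}^∞ σ_n / d^n is rational if and only if the sequence (σ_n) is eventually periodic. -/

import Mathlib

open Finset
namespace RatTwoVals

variable {d : ℕ} {ε : ℕ → ℚ}

lemma hD1 (hd : 2 ≤ d) : (1:ℝ) < (d:ℝ) := by exact_mod_cast hd.trans_lt' one_lt_two

lemma summable_geo (hd : 2 ≤ d) : Summable (fun n : ℕ => ((d:ℝ)⁻¹)^n) :=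
  summable_geometric_of_lt_one (by positivity) (inv_lt_one_of_one_lt₀ (hD1 hd))

lemma summable_eps (hd : 2 ≤ d) (f : ℕ → ℝ) (h0 : ∀ n, 0 ≤ f n) (h1 : ∀ n, f n ≤ 1) :
    Summable (fun n => f n / (d:ℝ)^n) := by
  refine Summable.of_nonneg_of_le (fun n => by have := h0 n; positivity) (fun n => ?_)
    (summable_geo hd)
  rw [inv_pow, ← one_div]
  gcongr
  exact h1 n

lemma eps_bounds (hε : ∀ n, ε n = 0 ∨ ε n = 1) (n : ℕ) :
    (0:ℝ) ≤ (ε n : ℝ) ∧ (ε n : ℝ) ≤ 1 := by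
  rcases hε n with h | h <;> rw [h] <;> norm_num

/-- the tail sums -/
noncomputable def x (d : ℕ) (ε : ℕ → ℚ) (N : ℕ) : ℝ :=
  ∑' n : ℕ, (ε (N + n) : ℝ) / (d:ℝ)^n

lemma summable_tail (hd : 2 ≤ d) (hε : ∀ n, ε n = 0 ∨ ε n = 1) (N : ℕ) :
    Summable (fun n => (ε (N + n) : ℝ) / (d:ℝ)^n) :=
  summable_eps hd _ (fun _ => (eps_bounds hε _).1) (fun _ => (eps_bounds hε _).2)

lemma x_nonneg (hd : 2 ≤ d) (hε : ∀ n, ε n = 0 ∨ ε n = 1) (N : ℕ) : 0 ≤ x d ε N :=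
  tsum_nonneg (fun n => by have := (eps_bounds hε (N+n)).1; positivity)

lemma x_le (hd : 2 ≤ d) (hε : ∀ n, ε n = 0 ∨ ε n = 1) (N : ℕ) :
    x d ε N ≤ (1 - (d:ℝ)⁻¹)⁻¹ := by
  have hD := hD1 hd
  have : x d ε N ≤ ∑' n : ℕ, ((d:ℝ)⁻¹)^n := by
    refine Summable.tsum_le_tsum (fun n => ?_) (summable_tail hd hε N) (summable_geo hd)
    rw [inv_pow, ← one_div]
    gcongr
    · exact (eps_bounds hε _).2
  rwa [tsum_geometric_of_lt_one (by positivity) (inv_lt_one_of_one_lt₀ hD)] at this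

lemma x_split (hd : 2 ≤ d) (hε : ∀ n, ε n = 0 ∨ ε n = 1) (N k : ℕ) :
    x d ε N = (∑ n ∈ range k, (ε (N + n) : ℝ) / (d:ℝ)^n) + ((d:ℝ)^k)⁻¹ * x d ε (N + k) := by
  rw [x, ← Summable.sum_add_tsum_nat_add k (summable_tail hd hε N)]
  congr 1
  rw [x, ← tsum_mul_left]
  refine tsum_congr fun i => ?_
  rw [show N + (i + k) = N + k + i from by ring, pow_add]
  ring

lemma x_step (hd : 2 ≤ d) (hε : ∀ n, ε n = 0 ∨ ε n = 1) (N : ℕ) :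
    x d ε N = (ε N : ℝ) + (d:ℝ)⁻¹ * x d ε (N + 1) := by
  have := x_split hd hε N 1
  simpa using this

lemma hBle (hd : 2 ≤ d) : (1 - (d:ℝ)⁻¹)⁻¹ ≤ 2 := by
  have hD := hD1 hd
  have h2 : (2:ℝ) ≤ (d:ℝ) := by exact_mod_cast hd
  have hinv : (d:ℝ)⁻¹ ≤ 2⁻¹ := inv_anti₀ (by norm_num) h2
  have : (1:ℝ)/2 ≤ 1 - (d:ℝ)⁻¹ := by
    rw [show (2:ℝ)⁻¹ = 1/2 from by norm_num] at hinv; linarith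
  calc (1 - (d:ℝ)⁻¹)⁻¹ ≤ ((1:ℝ)/2)⁻¹ := inv_anti₀ (by norm_num) this
    _ = 2 := by norm_num

lemma x_bound_of_zero (hd : 2 ≤ d) (hε : ∀ n, ε n = 0 ∨ ε n = 1) {N m : ℕ}
    (hm : N ≤ m) (h0 : ε m = 0) :
    x d ε N ≤ (1 - (d:ℝ)⁻¹)⁻¹ - ((d:ℝ)^(m - N))⁻¹ := by
  have hD := hD1 hd
  have hD0 : (0:ℝ) < (d:ℝ) := by linarith
  set B : ℝ := (1 - (d:ℝ)⁻¹)⁻¹ with hB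
  set k := m - N with hk
  have hNk : N + k = m := by omega
  have h1 : x d ε N = (∑ n ∈ range k, (ε (N + n) : ℝ) / (d:ℝ)^n) + ((d:ℝ)^k)⁻¹ * x d ε m := by
    rw [x_split hd hε N k, hNk]
  have h2 : x d ε m = (d:ℝ)⁻¹ * x d ε (m + 1) := by
    rw [x_step hd hε m, h0]; push_cast; ring
  have h3 : x d ε m ≤ (d:ℝ)⁻¹ * B := by
    rw [h2]
    have := x_le hd hε (m+1)
    have hi : (0:ℝ) ≤ (d:ℝ)⁻¹ := by positivity
    exact mul_le_mul_of_nonneg_left this hi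
  have h4 : (∑ n ∈ range k, (ε (N + n) : ℝ) / (d:ℝ)^n) ≤ ∑ n ∈ range k, ((d:ℝ)⁻¹)^n := by
    refine Finset.sum_le_sum fun n _ => ?_
    rw [inv_pow, ← one_div]
    gcongr
    · exact (eps_bounds hε _).2
  have hne1 : (d:ℝ)⁻¹ ≠ 1 := by
    have := inv_lt_one_of_one_lt₀ hD; linarith
  have h5 : ∑ n ∈ range k, ((d:ℝ)⁻¹)^n = (((d:ℝ)⁻¹)^k - 1)/((d:ℝ)⁻¹ - 1) := geom_sum_eq hne1 k
  have hkey : (((d:ℝ)⁻¹)^k - 1)/((d:ℝ)⁻¹ - 1) + ((d:ℝ)^k)⁻¹ * ((d:ℝ)⁻¹ * B) = B - ((d:ℝ)^k)⁻¹ := by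
    rw [hB, ← inv_pow]
    set u : ℝ := (d:ℝ)⁻¹ with hu
    have hu1 : u - 1 ≠ 0 := by intro h; apply hne1; rw [hu] at h ⊢; linarith
    have hu2 : 1 - u ≠ 0 := by intro h; apply hu1; linarith
    field_simp
    ring
  have hxm := x_le hd hε m
  calc x d ε N = (∑ n ∈ range k, (ε (N + n) : ℝ) / (d:ℝ)^n) + ((d:ℝ)^k)⁻¹ * x d ε m := h1
    _ ≤ (((d:ℝ)⁻¹)^k - 1)/((d:ℝ)⁻¹ - 1) + ((d:ℝ)^k)⁻¹ * ((d:ℝ)⁻¹ * B) := by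
        have hp : (0:ℝ) ≤ ((d:ℝ)^k)⁻¹ := by positivity
        have := mul_le_mul_of_nonneg_left h3 hp
        rw [← h5]
        linarith
    _ = B - ((d:ℝ)^k)⁻¹ := hkey

lemma x_lt_one (hd : 2 ≤ d) (hε : ∀ n, ε n = 0 ∨ ε n = 1)
    (h00 : ∀ N', ∃ m, N' ≤ m ∧ ε m = 0) {N : ℕ} (hN : ε N = 0) :
    x d ε N < 1 := by
  have hD := hD1 hd
  have hD0 : (0:ℝ) < (d:ℝ) := by linarith
  obtain ⟨m, hm, hm0⟩ := h00 (N + 1)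
  have h1 : x d ε N = (d:ℝ)⁻¹ * x d ε (N + 1) := by
    rw [x_step hd hε N, hN]; push_cast; ring
  have h2 := x_bound_of_zero hd hε hm hm0
  have hB2 := hBle hd
  have h2d : (2:ℝ) ≤ (d:ℝ) := by exact_mod_cast hd
  have hpos : (0:ℝ) < ((d:ℝ)^(m - (N+1)))⁻¹ := by positivity
  have hi : (0:ℝ) < (d:ℝ)⁻¹ := by positivity
  have h3 : x d ε (N+1) < (1 - (d:ℝ)⁻¹)⁻¹ := by linarith
  have h4 : (d:ℝ)⁻¹ * x d ε (N+1) < (d:ℝ)⁻¹ * (1 - (d:ℝ)⁻¹)⁻¹ :=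
    (mul_lt_mul_iff_right₀ hi).mpr h3
  have h5 : (d:ℝ)⁻¹ * (1 - (d:ℝ)⁻¹)⁻¹ ≤ 1 := by
    have : (d:ℝ)⁻¹ * (1 - (d:ℝ)⁻¹)⁻¹ ≤ (d:ℝ)⁻¹ * 2 := by
      exact mul_le_mul_of_nonneg_left hB2 (le_of_lt hi)
    have h6 : (d:ℝ)⁻¹ * 2 ≤ 1 := by
      rw [inv_mul_le_iff₀ hD0]; linarith
    linarith
  rw [h1]; linarith

lemma x_ge_one (hd : 2 ≤ d) (hε : ∀ n, ε n = 0 ∨ ε n = 1) {N : ℕ} (hN : ε N = 1) :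
    1 ≤ x d ε N := by
  have hD := hD1 hd
  rw [x_step hd hε N, hN]
  have h1 := x_nonneg hd hε (N+1)
  have hi : (0:ℝ) ≤ (d:ℝ)⁻¹ := by positivity
  push_cast
  nlinarith

theorem core (d : ℕ) (hd : 2 ≤ d) (ε : ℕ → ℚ) (hε : ∀ n, ε n = 0 ∨ ε n = 1) :
    (∃ q : ℚ, (∑' n : ℕ, (ε n : ℝ) / (d:ℝ)^n) = (q:ℝ)) ↔
      (∃ N p : ℕ, 1 ≤ p ∧ ∀ n ≥ N, ε (n + p) = ε n) := by
  have hD := hD1 hd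
  have hD0 : (0:ℝ) < (d:ℝ) := by linarith
  have hT0 : (∑' n : ℕ, (ε n : ℝ) / (d:ℝ)^n) = x d ε 0 := by
    rw [x]; exact tsum_congr fun n => by rw [zero_add]
  constructor
  · rintro ⟨q, hq⟩
    by_cases hA : ∃ N, ∀ n ≥ N, ε n = 1
    · obtain ⟨N, hN⟩ := hA
      exact ⟨N, 1, le_refl 1, fun n hn => by rw [hN n hn, hN (n+1) (by omega)]⟩
    push_neg at hA
    have h00 : ∀ N', ∃ m, N' ≤ m ∧ ε m = 0 := by
      intro N'
      obtain ⟨m, hm, hm1⟩ := hA N'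
      exact ⟨m, hm, (hε m).resolve_right hm1⟩
    have det : ∀ N M : ℕ, x d ε N = x d ε M → ε N = ε M := by
      intro N M h
      rcases hε N with h1 | h1 <;> rcases hε M with h2 | h2
      · rw [h1, h2]
      · have a := x_lt_one hd hε h00 h1
        have b := x_ge_one hd hε h2
        rw [h] at a; linarith
      · have a := x_lt_one hd hε h00 h2
        have b := x_ge_one hd hε h1
        rw [h] at b; linarith
      · rw [h1, h2]
    have hdne : (d:ℝ) ≠ 0 := ne_of_gt hD0
    have xrec : ∀ N, x d ε (N+1) = (d:ℝ) * x d ε N - (d:ℝ) * (ε N : ℝ) := by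
      intro N
      have h := x_step hd hε N
      have h2 : (d:ℝ) * x d ε N = (d:ℝ) * (ε N:ℝ) + x d ε (N+1) := by
        rw [h]; field_simp
      linarith
    have hstep : ∀ N M, x d ε N = x d ε M → x d ε (N+1) = x d ε (M+1) := by
      intro N M h
      rw [xrec, xrec, h, det N M h]
    set qx : ℕ → ℚ := fun N => Nat.rec q (fun n r => (d:ℚ) * r - (d:ℚ) * ε n) N with hqxdef
    have hqx0 : qx 0 = q := rfl
    have hqxs : ∀ N, qx (N+1) = (d:ℚ) * qx N - (d:ℚ) * ε N := fun N => rfl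
    have hx : ∀ N, x d ε N = (qx N : ℝ) := by
      intro N
      induction N with
      | zero => rw [hqx0, ← hT0]; exact hq
      | succ n ih => rw [xrec, ih, hqxs]; push_cast; ring
    have hdenne : ((q.den:ℚ)) ≠ 0 := by
      exact_mod_cast q.den_ne_zero
    have hz : ∀ N, ∃ z : ℤ, (z : ℚ) = qx N * q.den := by
      intro N
      induction N with
      | zero =>
        refine ⟨q.num, ?_⟩
        rw [hqx0]
        exact ((eq_div_iff hdenne).mp (Rat.num_div_den q).symm).symm
      | succ n ih =>
        obtain ⟨z, hzz⟩ := ih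
        rcases hε n with h | h
        · refine ⟨d * z, ?_⟩
          rw [hqxs, h]
          push_cast
          linear_combination (d:ℚ) * hzz
        · refine ⟨d * z - d * q.den, ?_⟩
          rw [hqxs, h]
          push_cast
          linear_combination (d:ℚ) * hzz
    choose z hzq using hz
    have hq2 : ∀ N, 0 ≤ qx N ∧ qx N ≤ 2 := by
      intro N
      have h0 := x_nonneg hd hε N
      have h1 := (x_le hd hε N).trans (hBle hd)
      rw [hx N] at h0 h1
      exact ⟨by exact_mod_cast h0, by exact_mod_cast h1⟩
    have hdenpos : (0:ℚ) < (q.den:ℚ) := by exact_mod_cast q.pos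
    have hzb : ∀ N, z N ∈ Finset.Icc 0 (2 * (q.den:ℤ)) := by
      intro N
      have h := hzq N
      have hb := hq2 N
      rw [Finset.mem_Icc]
      constructor
      · have h5 : (0:ℚ) ≤ (z N : ℚ) := by
          rw [h]; exact mul_nonneg hb.1 (le_of_lt hdenpos)
        exact_mod_cast h5
      · have h5 : (z N : ℚ) ≤ 2 * (q.den:ℚ) := by
          rw [h]; nlinarith [hb.2, hdenpos]
        exact_mod_cast h5
    obtain ⟨i, hi, j, hj, hij, hzij⟩ :=
      Finset.exists_ne_map_eq_of_card_lt_of_maps_to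
        (s := Finset.range (2 * q.den + 2)) (t := Finset.Icc 0 (2 * (q.den:ℤ)))
        (by rw [Finset.card_range, Int.card_Icc]; omega) (fun a _ => hzb a)
    have hqij : qx i = qx j := by
      have h5 : qx i * (q.den:ℚ) = qx j * (q.den:ℚ) := by
        rw [← hzq i, ← hzq j, hzij]
      exact mul_right_cancel₀ hdenne h5
    have hxij : x d ε i = x d ε j := by rw [hx, hx, hqij]
    have main : ∀ a b : ℕ, a < b → x d ε a = x d ε b →
        ∃ N p : ℕ, 1 ≤ p ∧ ∀ n ≥ N, ε (n + p) = ε n := by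
      intro a b hab hxab
      have haux : ∀ k, x d ε (a + k) = x d ε (b + k) := by
        intro k
        induction k with
        | zero => simpa using hxab
        | succ n ih =>
          have h5 := hstep _ _ ih
          rw [show a + (n+1) = a + n + 1 from by ring, show b + (n+1) = b + n + 1 from by ring]
          exact h5
      refine ⟨a, b - a, by omega, fun n hn => ?_⟩
      have h1 : n + (b - a) = b + (n - a) := by omega
      have h2 : n = a + (n - a) := by omega
      rw [h1]
      conv_rhs => rw [h2]
      exact det _ _ (haux (n - a)).symm
    rcases hij.lt_or_gt with hlt | hlt
    · exact main i j hlt hxij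
    · exact main j i hlt hxij.symm
  · rintro ⟨N, p, hp, hper⟩
    have hxp : x d ε (N + p) = x d ε N := by
      rw [x, x]
      refine tsum_congr fun n => ?_
      have h5 : ε (N + p + n) = ε (N + n) := by
        have h6 := hper (N + n) (by omega)
        rw [show N + p + n = N + n + p from by ring, h6]
      rw [h5]
    have hs := x_split hd hε N p
    rw [hxp] at hs
    have hdp1 : (1:ℝ) < (d:ℝ)^p := one_lt_pow₀ hD (by omega)
    have hinvlt : ((d:ℝ)^p)⁻¹ < 1 := inv_lt_one_of_one_lt₀ hdp1
    have hne : 1 - ((d:ℝ)^p)⁻¹ ≠ 0 := by intro h; linarith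
    have h2 : x d ε N * (1 - ((d:ℝ)^p)⁻¹) =
        ∑ n ∈ range p, (ε (N + n) : ℝ) / (d:ℝ)^n := by
      linear_combination hs
    have hxN : x d ε N =
        (∑ n ∈ range p, (ε (N + n) : ℝ) / (d:ℝ)^n) * (1 - ((d:ℝ)^p)⁻¹)⁻¹ := by
      rw [← h2, mul_assoc, mul_inv_cancel₀ hne, mul_one]
    refine ⟨(∑ n ∈ range N, ε n / (d:ℚ)^n) +
      ((d:ℚ)^N)⁻¹ * ((∑ n ∈ range p, ε (N + n) / (d:ℚ)^n) * (1 - ((d:ℚ)^p)⁻¹)⁻¹), ?_⟩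
    rw [hT0, x_split hd hε 0 N]
    simp only [zero_add]
    rw [hxN]
    push_cast
    ring

end RatTwoVals

/-- For an integer `d ≥ 2`, two distinct rationals `c₀ ≠ c₁`, and a sequence
`σ : ℕ → ℚ` taking values in `{c₀, c₁}`, the real number `∑_{n=0}^∞ σ n / d^n`
is rational if and only if the sequence `σ` is eventually periodic. -/
theorem rationality_two_values (d : ℕ) (hd : 2 ≤ d) (c₀ c₁ : ℚ) (hne : c₀ ≠ c₁)
    (σ : ℕ → ℚ) (hσ : ∀ n, σ n = c₀ ∨ σ n = c₁) :
    (∃ q : ℚ, (∑' n : ℕ, (σ n : ℝ) / (d : ℝ) ^ n) = (q : ℝ)) ↔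
      (∃ N p : ℕ, 1 ≤ p ∧ ∀ n ≥ N, σ (n + p) = σ n) := by
  classical
  have hD := RatTwoVals.hD1 hd
  set ε : ℕ → ℚ := fun n => if σ n = c₁ then 1 else 0 with hεdef
  have hε : ∀ n, ε n = 0 ∨ ε n = 1 := by
    intro n; by_cases h : σ n = c₁ <;> simp [hεdef, h]
  have hσε : ∀ n, σ n = c₀ + (c₁ - c₀) * ε n := by
    intro n
    rcases hσ n with h | h
    · simp [hεdef, h, hne]
    · simp [hεdef, h]
  have hs1 : Summable (fun n : ℕ => (c₀:ℝ) * ((d:ℝ)⁻¹)^n) :=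
    (RatTwoVals.summable_geo hd).mul_left _
  have hs2 : Summable (fun n : ℕ => (ε n : ℝ) / (d:ℝ)^n) :=
    RatTwoVals.summable_eps hd _ (fun n => (RatTwoVals.eps_bounds hε n).1)
      (fun n => (RatTwoVals.eps_bounds hε n).2)
  have hs3 : Summable (fun n : ℕ => ((c₁ - c₀ : ℚ):ℝ) * ((ε n : ℝ) / (d:ℝ)^n)) :=
    hs2.mul_left _
  have key : (∑' n : ℕ, (σ n : ℝ) / (d:ℝ)^n)
      = (c₀:ℝ) * (1 - (d:ℝ)⁻¹)⁻¹
        + ((c₁ - c₀:ℚ):ℝ) * (∑' n : ℕ, (ε n : ℝ) / (d:ℝ)^n) := by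
    have hfun : ∀ n : ℕ, (σ n : ℝ) / (d:ℝ)^n
        = (c₀:ℝ) * ((d:ℝ)⁻¹)^n + ((c₁ - c₀:ℚ):ℝ) * ((ε n : ℝ) / (d:ℝ)^n) := by
      intro n
      rw [hσε n]
      push_cast
      rw [inv_pow]
      ring
    calc (∑' n : ℕ, (σ n : ℝ) / (d:ℝ)^n)
        = ∑' n : ℕ, ((c₀:ℝ) * ((d:ℝ)⁻¹)^n
            + ((c₁ - c₀:ℚ):ℝ) * ((ε n : ℝ) / (d:ℝ)^n)) := tsum_congr hfun
      _ = (∑' n : ℕ, (c₀:ℝ) * ((d:ℝ)⁻¹)^n)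
            + ∑' n : ℕ, ((c₁ - c₀:ℚ):ℝ) * ((ε n : ℝ) / (d:ℝ)^n) := Summable.tsum_add hs1 hs3
      _ = (c₀:ℝ) * (1 - (d:ℝ)⁻¹)⁻¹
            + ((c₁ - c₀:ℚ):ℝ) * (∑' n : ℕ, (ε n : ℝ) / (d:ℝ)^n) := by
          rw [tsum_mul_left, tsum_mul_left,
            tsum_geometric_of_lt_one (by positivity) (inv_lt_one_of_one_lt₀ hD)]
  have hk' : (c₁:ℝ) - (c₀:ℝ) ≠ 0 := sub_ne_zero_of_ne (by exact_mod_cast hne.symm)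
  have hrat : (∃ q : ℚ, (∑' n : ℕ, (σ n : ℝ) / (d:ℝ)^n) = (q:ℝ))
      ↔ (∃ q : ℚ, (∑' n : ℕ, (ε n : ℝ) / (d:ℝ)^n) = (q:ℝ)) := by
    constructor
    · rintro ⟨q, hq⟩
      refine ⟨(q - c₀ * (1 - (d:ℚ)⁻¹)⁻¹) / (c₁ - c₀), ?_⟩
      rw [key] at hq
      push_cast at hq ⊢
      rw [eq_div_iff hk']
      linear_combination hq
    · rintro ⟨q, hq⟩
      refine ⟨c₀ * (1 - (d:ℚ)⁻¹)⁻¹ + (c₁ - c₀) * q, ?_⟩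
      rw [key, hq]
      push_cast
      ring
  have hper : ∀ n m : ℕ, ε n = ε m ↔ σ n = σ m := by
    intro n m
    constructor
    · intro h
      rcases hσ n with h1 | h1 <;> rcases hσ m with h2 | h2
      · rw [h1, h2]
      · exfalso
        have e1 : ε n = 0 := by simp [hεdef, h1, hne]
        have e2 : ε m = 1 := by simp [hεdef, h2]
        rw [e1, e2] at h; norm_num at h
      · exfalso
        have e1 : ε n = 1 := by simp [hεdef, h1]
        have e2 : ε m = 0 := by simp [hεdef, h2, hne]
        rw [e1, e2] at h; norm_num at h
      · rw [h1, h2]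
    · intro h
      simp only [hεdef]
      rw [h]
  rw [hrat, RatTwoVals.core d hd ε hε]
  constructor
  · rintro ⟨N, p, hp, h⟩
    exact ⟨N, p, hp, fun n hn => (hper _ _).mp (h n hn)⟩
  · rintro ⟨N, p, hp, h⟩
    exact ⟨N, p, hp, fun n hn => (hper _ _).mpr (h n hn)⟩
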